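/- Let a be a positive integer that is not a perfect square and b a positive integer such that a·x² - b·y² = 1 is solvable in positive integers. Let (u₁, v₁) be the minimal positive solution and P = 4a·u₁² - 2. Then all positive integer solutions of a·x² - b·y² = 1 are given by x = u₁·(U_{n+1} - U_n), y = v₁·(U_{n+1} + U_n) for n ≥ 0, where U_n = U_n(P, -1). -/

import Mathlib

/-- Lucas sequence of the first kind with parameters `(P, -1)`. -/
def lucasU (P : ℤ) : ℕ → ℤ
  | 0 => 0
  | 1 => 1
  | n + 2 => P * lucasU P (n + 1) - lucasU P n

lemma lucasU_inv (P : ℤ) : ∀ n : ℕ,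
    lucasU P (n+1) ^ 2 - P * lucasU P (n+1) * lucasU P n + lucasU P n ^ 2 = 1
  | 0 => by simp [lucasU]
  | n + 1 => by
    have ih := lucasU_inv P n
    simp only [lucasU]
    linear_combination ih

set_option maxHeartbeats 1000000 in
lemma key16 (a b u₁ v₁ : ℤ) (ha : 0 < a) (hb : 0 < b) (hns : ¬ IsSquare a)
    (hu₁ : 0 < u₁) (hv₁ : 0 < v₁) (hsol : a * u₁ ^ 2 - b * v₁ ^ 2 = 1)
    (hmin : ∀ u v : ℤ, 0 < u → 0 < v → a * u ^ 2 - b * v ^ 2 = 1 → u₁ ≤ u) :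
    ∀ N : ℕ, ∀ x y : ℤ, x ≤ (N : ℤ) → 0 < x → 0 < y → a * x ^ 2 - b * y ^ 2 = 1 →
      ∃ n : ℕ, x = u₁ * (lucasU (4 * a * u₁ ^ 2 - 2) (n + 1) - lucasU (4 * a * u₁ ^ 2 - 2) n) ∧
        y = v₁ * (lucasU (4 * a * u₁ ^ 2 - 2) (n + 1) + lucasU (4 * a * u₁ ^ 2 - 2) n) := by
  intro N
  induction N with
  | zero => intro x y hxN hx _ _; exfalso; norm_num at hxN; linarith
  | succ N ih =>
    intro x y hxN hx hy hxy
    rcases eq_or_lt_of_le (hmin x y hx hy hxy) with he | hlt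
    · refine ⟨0, ?_, ?_⟩
      · simp [lucasU, ← he]
      · have h2 : y ^ 2 = v₁ ^ 2 := by
          have hb' : b * y ^ 2 = b * v₁ ^ 2 := by rw [← he] at hxy; linarith
          exact mul_left_cancel₀ hb.ne' hb'
        have h3 : (y - v₁) * (y + v₁) = 0 := by linear_combination h2
        rcases mul_eq_zero.mp h3 with h4 | h4
        · have : y = v₁ := by linarith
          simp [lucasU, this]
        · exfalso; linarith
    · -- descent
      set t : ℤ := 2 * a * u₁ ^ 2 - 1 with ht
      set s : ℤ := 2 * u₁ * v₁ with hs
      have hunit : t ^ 2 - a * b * s ^ 2 = 1 := by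
        rw [ht, hs]; linear_combination (4 * a * u₁ ^ 2) * hsol
      have ht1 : 1 ≤ t := by nlinarith
      have hs1 : 2 ≤ s := by nlinarith
      set x' : ℤ := t * x - b * s * y with hx'
      set y' : ℤ := t * y - a * s * x with hy'
      have hsol' : a * x' ^ 2 - b * y' ^ 2 = 1 := by
        rw [hx', hy']
        linear_combination (a * x ^ 2 - b * y ^ 2) * hunit + hxy
      have hp : 0 < t * x := mul_pos (by linarith) hx
      have hq : 0 < b * s * y := mul_pos (mul_pos hb (by linarith)) hy
      have hsq : (b * s * y) ^ 2 + (x ^ 2 + b * s ^ 2) = (t * x) ^ 2 := by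
        linear_combination (-(x ^ 2)) * hunit - b * s ^ 2 * hxy
      have hx'pos : 0 < x' := by
        rw [hx']
        nlinarith [hsq, hp, hq, sq_nonneg x,
          mul_pos hb (mul_pos (by linarith : (0:ℤ) < s) (by linarith : (0:ℤ) < s))]
      rcases lt_trichotomy 0 y' with hy'pos | hy'0 | hy'neg
      · -- y' > 0 : use induction hypothesis
        have hxrec : x = t * x' + b * s * y' := by
          rw [hx', hy']; linear_combination (-x) * hunit
        have hyrec : y = a * s * x' + t * y' := by
          rw [hx', hy']; linear_combination (-y) * hunit
        have hbs : 2 ≤ b * s := by nlinarith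
        have h2 : 2 ≤ b * s * y' := by
          calc (2:ℤ) = 2 * 1 := by norm_num
          _ ≤ (b * s) * y' := mul_le_mul hbs (by linarith) (by norm_num) (by linarith)
        have h1 : 0 ≤ (t - 1) * x' := mul_nonneg (by linarith) hx'pos.le
        have hlt2 : x' + 1 ≤ x := by nlinarith [hxrec, h1, h2]
        obtain ⟨n, hxe, hye⟩ := ih x' y' (by push_cast at hxN ⊢; linarith) hx'pos hy'pos hsol'
        refine ⟨n + 1, ?_, ?_⟩
        · show x = u₁ * (lucasU (4 * a * u₁ ^ 2 - 2) (n + 2) - lucasU (4 * a * u₁ ^ 2 - 2) (n + 1))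
          simp only [lucasU]
          linear_combination hxrec + t * hxe + b * s * hye -
            2 * u₁ * (lucasU (4 * a * u₁ ^ 2 - 2) (n + 1) + lucasU (4 * a * u₁ ^ 2 - 2) n) * hsol
        · show y = v₁ * (lucasU (4 * a * u₁ ^ 2 - 2) (n + 2) + lucasU (4 * a * u₁ ^ 2 - 2) (n + 1))
          simp only [lucasU]
          linear_combination hyrec + a * s * hxe + t * hye
      · -- y' = 0 : a is a square, contradiction
        exfalso
        have h1 : a * x' ^ 2 = 1 := by rw [← hy'0] at hsol'; linarith
        have ha1 : a = 1 := by nlinarith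
        exact hns (ha1 ▸ IsSquare.one)
      · -- y' < 0 : contradiction with minimality
        exfalso
        have hYpos : 0 < -y' := by linarith
        have hsolY : a * x' ^ 2 - b * (-y') ^ 2 = 1 := by linear_combination hsol'
        have hx'u : u₁ ≤ x' := hmin x' (-y') hx'pos hYpos hsolY
        have h5 : v₁ ^ 2 ≤ (-y') ^ 2 := by
          nlinarith [mul_nonneg ha.le
            (mul_nonneg (sub_nonneg.mpr hx'u) (by linarith : (0:ℤ) ≤ x' + u₁)), hb, hsolY, hsol]
        have hYv : v₁ ≤ -y' := by nlinarith [h5, hYpos, hv₁]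
        have h6 : v₁ ^ 2 < y ^ 2 := by
          nlinarith [mul_pos ha (mul_pos (by linarith : (0:ℤ) < x - u₁)
            (by linarith : (0:ℤ) < x + u₁)), hb, hxy, hsol]
        have hyv : v₁ + 1 ≤ y := by nlinarith [h6, hy, hv₁]
        have hid : a * x' * x + b * (-y') * y = t := by
          rw [hx', hy', ht]; linear_combination (2 * a * u₁ ^ 2 - 1) * hxy
        nlinarith [mul_pos ha hu₁, mul_pos hb hv₁, hid,
          mul_nonneg (mul_nonneg ha.le (sub_nonneg.mpr hx'u)) hx.le,
          mul_nonneg (mul_nonneg ha.le hu₁.le) (by linarith : (0:ℤ) ≤ x - u₁ - 1),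
          mul_nonneg (mul_nonneg hb.le (sub_nonneg.mpr hYv)) hy.le,
          mul_nonneg (mul_nonneg hb.le hv₁.le) (by linarith : (0:ℤ) ≤ y - v₁ - 1)]

theorem stmt_16 (a b : ℤ) (ha : 0 < a) (hb : 0 < b) (hns : ¬ IsSquare a)
    (u₁ v₁ : ℤ) (hu₁ : 0 < u₁) (hv₁ : 0 < v₁) (hsol : a * u₁ ^ 2 - b * v₁ ^ 2 = 1)
    (hmin : ∀ u v : ℤ, 0 < u → 0 < v → a * u ^ 2 - b * v ^ 2 = 1 → u₁ ≤ u)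
    (x y : ℤ) (hx : 0 < x) (hy : 0 < y) :
    a * x ^ 2 - b * y ^ 2 = 1 ↔
      ∃ n : ℕ, x = u₁ * (lucasU (4 * a * u₁ ^ 2 - 2) (n + 1) - lucasU (4 * a * u₁ ^ 2 - 2) n) ∧
        y = v₁ * (lucasU (4 * a * u₁ ^ 2 - 2) (n + 1) + lucasU (4 * a * u₁ ^ 2 - 2) n) := by
  constructor
  · intro hxy
    exact key16 a b u₁ v₁ ha hb hns hu₁ hv₁ hsol hmin x.toNat x y (Int.self_le_toNat x) hx hy hxy
  · rintro ⟨n, hx1, hy1⟩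
    rw [hx1, hy1]
    linear_combination
      (lucasU (4 * a * u₁ ^ 2 - 2) (n + 1) + lucasU (4 * a * u₁ ^ 2 - 2) n) ^ 2 * hsol +
        lucasU_inv (4 * a * u₁ ^ 2 - 2) n
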